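/- Any sequence of cyclical and sequential moves transforming a k-clustering C into a k-clustering C' contains at least (1/2)·∑_i | |C_i| − |C'_i| | sequential moves; in particular the transformation distance satisfies d(C,C') ≥ (1/2)·∑_i δ_i. -/

import Mathlib

variable {X : Type*} [Fintype X] [DecidableEq X] {k : ℕ}

/-- The clustering-difference graph `CDG(c, c'')` (one edge `c x → c'' x` for each
item `x` with `c x ≠ c'' x`) is a single directed cycle: there are `m + 1` distinct
cluster indices `v 0, ..., v m` and the items moved are exactly one per edge
`v i → v (i+1)` (indices mod `m + 1`). -/
def IsCyclicalMove (c c'' : X → Fin k) : Prop :=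
  ∃ (m : ℕ) (v : Fin (m + 1) ↪ Fin k)
    (e : {x : X // c x ≠ c'' x} ≃ Fin (m + 1)),
    ∀ x : {x : X // c x ≠ c'' x}, c x.1 = v (e x) ∧ c'' x.1 = v (e x + 1)

/-- The clustering-difference graph `CDG(c, c'')` is a single directed path: there
are `m + 2` distinct cluster indices `v 0, ..., v (m+1)` and the items moved are
exactly one per edge `v i → v (i+1)`, `0 ≤ i ≤ m`. -/
def IsSequentialMove (c c'' : X → Fin k) : Prop :=
  ∃ (m : ℕ) (v : Fin (m + 2) ↪ Fin k)
    (e : {x : X // c x ≠ c'' x} ≃ Fin (m + 1)),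
    ∀ x : {x : X // c x ≠ c'' x}, c x.1 = v (e x).castSucc ∧ c'' x.1 = v (e x).succ

/-- An elementary move: a cyclical or a sequential move. -/
def IsMove (c c'' : X → Fin k) : Prop :=
  IsCyclicalMove c c'' ∨ IsSequentialMove c c''

/-- The transformation distance: the minimum number of elementary moves needed to
transform `c` into `c'`. -/
noncomputable def transDist (c c' : X → Fin k) : ℕ :=
  sInf {n | ∃ f : ℕ → X → Fin k, f 0 = c ∧ f n = c' ∧ ∀ i < n, IsMove (f i) (f (i + 1))}

/-- The size of cluster `i` in the clustering `c`. -/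
def clusterSize (c : X → Fin k) (i : Fin k) : ℕ :=
  (Finset.univ.filter fun x => c x = i).card

/-- The outdegree of vertex `i` in `CDG(c, c')`. -/
def cdgOutdeg (c c' : X → Fin k) (i : Fin k) : ℕ :=
  (Finset.univ.filter fun x => c x = i ∧ c' x ≠ i).card

/-- The indegree of vertex `i` in `CDG(c, c')`. -/
def cdgIndeg (c c' : X → Fin k) (i : Fin k) : ℕ :=
  (Finset.univ.filter fun x => c' x = i ∧ c x ≠ i).card

/-- The shared degree of vertex `i` in `CDG(c, c')`. -/
def sharedDeg (c c' : X → Fin k) (i : Fin k) : ℕ :=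
  min (cdgIndeg c c' i) (cdgOutdeg c c' i)


section AuxLemmas

variable {X : Type*} [Fintype X] [DecidableEq X] {k : ℕ}

private lemma key_bal (c c'' : X → Fin k) (i : Fin k) :
    clusterSize c i + cdgIndeg c c'' i = clusterSize c'' i + cdgOutdeg c c'' i := by
  unfold clusterSize cdgIndeg cdgOutdeg
  rw [Finset.card_filter, Finset.card_filter, Finset.card_filter, Finset.card_filter,
    ← Finset.sum_add_distrib, ← Finset.sum_add_distrib]
  refine Finset.sum_congr rfl fun x _ => ?_
  by_cases h1 : c x = i <;> by_cases h2 : c'' x = i <;> simp [h1, h2]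

private lemma card_transfer {m : ℕ} {c c'' : X → Fin k}
    (e : {x : X // c x ≠ c'' x} ≃ Fin (m + 1))
    (q : X → Prop) [DecidablePred q] (p : Fin (m + 1) → Prop) [DecidablePred p]
    (hq : ∀ x, q x → c x ≠ c'' x)
    (hqp : ∀ x : {x : X // c x ≠ c'' x}, q x.1 ↔ p (e x)) :
    (Finset.univ.filter q).card = (Finset.univ.filter p).card := by
  refine Finset.card_bij (fun x hx => e ⟨x, hq x (by simpa using hx)⟩) ?_ ?_ ?_
  · intro a ha
    simp only [Finset.mem_filter, Finset.mem_univ, true_and] at ha ⊢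
    exact (hqp _).mp ha
  · intro a ha b hb hab
    exact congrArg Subtype.val (e.injective hab)
  · intro j hj
    simp only [Finset.mem_filter, Finset.mem_univ, true_and] at hj
    refine ⟨(e.symm j).1, ?_, ?_⟩
    · simp only [Finset.mem_filter, Finset.mem_univ, true_and]
      refine (hqp (e.symm j)).mpr ?_
      rwa [e.apply_symm_apply]
    · simp

private lemma cyc_size_eq {c c'' : X → Fin k} (h : IsCyclicalMove c c'') (i : Fin k) :
    clusterSize c i = clusterSize c'' i := by
  obtain ⟨m, v, e, hve⟩ := h
  have hout : cdgOutdeg c c'' i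
      = (Finset.univ.filter fun j : Fin (m + 1) => v j = i).card := by
    refine card_transfer e _ _ (fun x hx hcc => hx.2 (hcc.symm.trans hx.1)) (fun x => ?_)
    constructor
    · rintro ⟨h1, -⟩; rw [← (hve x).1, h1]
    · intro hp
      exact ⟨(hve x).1.trans hp, fun hcc => x.2 (((hve x).1.trans hp).trans hcc.symm)⟩
  have hin : cdgIndeg c c'' i
      = (Finset.univ.filter fun j : Fin (m + 1) => v (j + 1) = i).card := by
    refine card_transfer e _ _ (fun x hx hcc => hx.2 (hcc.trans hx.1)) (fun x => ?_)
    constructor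
    · rintro ⟨h1, -⟩; rw [← (hve x).2, h1]
    · intro hp
      exact ⟨(hve x).2.trans hp, fun hcc => x.2 (hcc.trans ((hve x).2.trans hp).symm)⟩
  have hbij : (Finset.univ.filter fun j : Fin (m + 1) => v (j + 1) = i).card
      = (Finset.univ.filter fun j : Fin (m + 1) => v j = i).card := by
    refine Finset.card_bij (fun j _ => j + 1) ?_ ?_ ?_
    · intro a ha
      simp only [Finset.mem_filter, Finset.mem_univ, true_and] at ha ⊢
      exact ha
    · intro a _ b _ hab; exact add_right_cancel hab
    · intro b hb
      simp only [Finset.mem_filter, Finset.mem_univ, true_and] at hb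
      exact ⟨b - 1, by simp [sub_add_cancel, hb], by simp [sub_add_cancel]⟩
  have := key_bal c c'' i
  omega

private lemma seq_dist_le {c c'' : X → Fin k} (h : IsSequentialMove c c'') :
    ∑ i : Fin k, Nat.dist (clusterSize c i) (clusterSize c'' i) ≤ 2 := by
  obtain ⟨m, v, e, hve⟩ := h
  have hout : ∀ i, cdgOutdeg c c'' i
      = (Finset.univ.filter fun j : Fin (m + 1) => v j.castSucc = i).card := by
    intro i
    refine card_transfer e _ _ (fun x hx hcc => hx.2 (hcc.symm.trans hx.1)) (fun x => ?_)
    constructor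
    · rintro ⟨h1, -⟩; rw [← (hve x).1, h1]
    · intro hp
      exact ⟨(hve x).1.trans hp, fun hcc => x.2 (((hve x).1.trans hp).trans hcc.symm)⟩
  have hin : ∀ i, cdgIndeg c c'' i
      = (Finset.univ.filter fun j : Fin (m + 1) => v j.succ = i).card := by
    intro i
    refine card_transfer e _ _ (fun x hx hcc => hx.2 (hcc.trans hx.1)) (fun x => ?_)
    constructor
    · rintro ⟨h1, -⟩; rw [← (hve x).2, h1]
    · intro hp
      exact ⟨(hve x).2.trans hp, fun hcc => x.2 (hcc.trans ((hve x).2.trans hp).symm)⟩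
  have hSout : ∑ i : Fin k, cdgOutdeg c c'' i = m + 1 := by
    have h1 := Finset.card_eq_sum_card_fiberwise
      (f := fun j : Fin (m + 1) => v j.castSucc) (s := Finset.univ) (t := Finset.univ)
      (fun x _ => Finset.mem_univ _)
    simp only [Finset.card_univ, Fintype.card_fin] at h1
    exact (Finset.sum_congr rfl fun i _ => hout i).trans h1.symm
  have hSin : ∑ i : Fin k, cdgIndeg c c'' i = m + 1 := by
    have h1 := Finset.card_eq_sum_card_fiberwise
      (f := fun j : Fin (m + 1) => v j.succ) (s := Finset.univ) (t := Finset.univ)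
      (fun x _ => Finset.mem_univ _)
    simp only [Finset.card_univ, Fintype.card_fin] at h1
    exact (Finset.sum_congr rfl fun i _ => hin i).trans h1.symm
  have hSmin : m ≤ ∑ i : Fin k, min (cdgOutdeg c c'' i) (cdgIndeg c c'' i) := by
    have hmid : ∀ i : Fin k,
        (Finset.univ.filter fun j : Fin m => v j.succ.castSucc = i).card
          ≤ min (cdgOutdeg c c'' i) (cdgIndeg c c'' i) := by
      intro i
      refine le_min ?_ ?_
      · rw [hout i]
        refine Finset.card_le_card_of_injOn Fin.succ (fun j hj => ?_)
          (fun a _ b _ hab => Fin.succ_injective _ hab)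
        simp only [Finset.mem_coe, Finset.mem_filter, Finset.mem_univ, true_and] at hj ⊢
        exact hj
      · rw [hin i]
        refine Finset.card_le_card_of_injOn Fin.castSucc (fun j hj => ?_)
          (fun a _ b _ hab => Fin.castSucc_injective _ hab)
        simp only [Finset.mem_coe, Finset.mem_filter, Finset.mem_univ, true_and] at hj ⊢
        rw [Fin.succ_castSucc]
        exact hj
    have h1 := Finset.card_eq_sum_card_fiberwise
      (f := fun j : Fin m => v j.succ.castSucc) (s := Finset.univ) (t := Finset.univ)
      (fun x _ => Finset.mem_univ _)
    simp only [Finset.card_univ, Fintype.card_fin] at h1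
    calc m = _ := h1
      _ ≤ _ := Finset.sum_le_sum fun i _ => hmid i
  have hdist : ∀ i : Fin k, Nat.dist (clusterSize c i) (clusterSize c'' i)
      + 2 * min (cdgOutdeg c c'' i) (cdgIndeg c c'' i)
      = cdgOutdeg c c'' i + cdgIndeg c c'' i := by
    intro i
    have := key_bal c c'' i
    simp only [Nat.dist]
    omega
  have hsum : (∑ i : Fin k, Nat.dist (clusterSize c i) (clusterSize c'' i))
      + 2 * ∑ i : Fin k, min (cdgOutdeg c c'' i) (cdgIndeg c c'' i)
      = (2 * m + 2) := by
    rw [Finset.mul_sum, ← Finset.sum_add_distrib]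
    rw [Finset.sum_congr rfl fun i _ => hdist i, Finset.sum_add_distrib, hSout, hSin]
    omega
  omega

open scoped Classical in
private lemma sum_dist_le (f : ℕ → X → Fin k) (n : ℕ)
    (hmove : ∀ i < n, IsMove (f i) (f (i + 1))) :
    ∑ i : Fin k, Nat.dist (clusterSize (f 0) i) (clusterSize (f n) i) ≤
      2 * ((Finset.range n).filter fun i => IsSequentialMove (f i) (f (i + 1))).card := by
  induction n with
  | zero => simp [Nat.dist_self]
  | succ n ih =>
    have ih' := ih (fun i hi => hmove i (Nat.lt_succ_of_lt hi))
    have htri : ∑ i : Fin k, Nat.dist (clusterSize (f 0) i) (clusterSize (f (n + 1)) i)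
        ≤ (∑ i : Fin k, Nat.dist (clusterSize (f 0) i) (clusterSize (f n) i))
          + ∑ i : Fin k, Nat.dist (clusterSize (f n) i) (clusterSize (f (n + 1)) i) := by
      rw [← Finset.sum_add_distrib]
      exact Finset.sum_le_sum fun i _ => Nat.dist.triangle_inequality _ _ _
    rw [Finset.range_add_one, Finset.filter_insert]
    by_cases hseq : IsSequentialMove (f n) (f (n + 1))
    · have hstep := seq_dist_le hseq
      rw [if_pos hseq, Finset.card_insert_of_notMem (by simp)]
      omega
    · have hcyc : IsCyclicalMove (f n) (f (n + 1)) :=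
        (hmove n (Nat.lt_succ_self n)).resolve_right hseq
      have hstep : ∑ i : Fin k, Nat.dist (clusterSize (f n) i) (clusterSize (f (n + 1)) i) = 0 :=
        Finset.sum_eq_zero fun i _ => by rw [cyc_size_eq hcyc i, Nat.dist_self]
      rw [if_neg hseq]
      omega

private lemma single_move {c c'' : X → Fin k} (x : X) (hx : c x ≠ c'' x)
    (hothers : ∀ y, y ≠ x → c y = c'' y) : IsSequentialMove c c'' := by
  have hval : ∀ y : {y : X // c y ≠ c'' y}, y.1 = x := by
    rintro ⟨y, hy⟩
    by_contra hne
    exact hy (hothers y hne)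
  refine ⟨0, ⟨![c x, c'' x], ?_⟩,
    { toFun := fun _ => 0
      invFun := fun _ => ⟨x, hx⟩
      left_inv := fun y => Subtype.ext (hval y).symm
      right_inv := fun j => by fin_cases j <;> rfl }, ?_⟩
  · intro a b hab
    fin_cases a <;> fin_cases b <;> simp_all
  · intro y
    have h1 : c y.1 = c x := by rw [hval y]
    have h2 : c'' y.1 = c'' x := by rw [hval y]
    constructor
    · simp only [Equiv.coe_fn_mk, Function.Embedding.coeFn_mk, h1, Fin.castSucc_zero,
        Matrix.cons_val_zero]
      rfl
    · simp only [Equiv.coe_fn_mk, Function.Embedding.coeFn_mk, h2, Fin.succ_zero_eq_one,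
        Matrix.cons_val_one, Matrix.head_cons]
      rfl

private lemma exists_transform (c c' : X → Fin k) :
    ∃ n, ∃ f : ℕ → X → Fin k, f 0 = c ∧ f n = c' ∧ ∀ i < n, IsMove (f i) (f (i + 1)) := by
  set L := (Finset.univ.filter fun x => c x ≠ c' x).toList with hLdef
  have hnodup : L.Nodup := Finset.nodup_toList _
  have hmem : ∀ x, x ∈ L ↔ c x ≠ c' x := by
    intro x; rw [hLdef, Finset.mem_toList, Finset.mem_filter]; simp
  refine ⟨L.length, fun i x => if x ∈ L.take i then c' x else c x, ?_, ?_, ?_⟩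
  · funext x; simp
  · funext x
    show (if x ∈ L.take L.length then c' x else c x) = c' x
    rw [List.take_length]
    by_cases h : x ∈ L
    · simp [h]
    · have hcx : c x = c' x := not_not.mp (fun hne => h ((hmem x).mpr hne))
      simp [h, hcx]
  · intro i hi
    show IsMove (fun x => if x ∈ L.take i then c' x else c x)
      (fun x => if x ∈ L.take (i + 1) then c' x else c x)
    set x0 := L.get ⟨i, hi⟩ with hx0
    have htake : L.take (i + 1) = L.take i ++ [x0] := by
      rw [List.take_succ]
      congr 1
      simp [List.getElem?_eq_getElem hi, hx0]
    have hx0L : x0 ∈ L := List.get_mem _ _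
    have hx0nin : x0 ∉ L.take i := by
      intro hmem'
      rw [List.mem_take_iff_getElem] at hmem'
      obtain ⟨j, hj, hji⟩ := hmem'
      have hj' : j < i := lt_of_lt_of_le hj (min_le_left _ _)
      have hjl : j < L.length := lt_of_lt_of_le hj (min_le_right _ _)
      have heq : j = i := (List.Nodup.getElem_inj_iff hnodup (hi := hjl) (hj := hi)).mp (by
        rw [hji, hx0]; simp [List.get_eq_getElem])
      omega
    have hx0ne : c x0 ≠ c' x0 := (hmem x0).mp hx0L
    refine Or.inr (single_move x0 ?_ ?_)
    · simp only [hx0nin, if_neg, htake]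
      simp [hx0nin, htake]
      exact hx0ne
    · intro y hy
      have : y ∈ L.take (i + 1) ↔ y ∈ L.take i := by
        rw [htake]
        simp [hy]
      simp only [this]

end AuxLemmas

open scoped Classical in
/-- Any sequence of elementary moves transforming `c` into `c'` contains at least
`(1/2) ∑ᵢ δᵢ` sequential moves, where `δᵢ` is the absolute change in size of
cluster `i`; in particular `d(c, c') ≥ (1/2) ∑ᵢ δᵢ`. -/
theorem stmt_7 (c c' : X → Fin k) :
    (∀ (n : ℕ) (f : ℕ → X → Fin k), f 0 = c → f n = c' →
      (∀ i < n, IsMove (f i) (f (i + 1))) →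
      (∑ i : Fin k, Nat.dist (clusterSize c i) (clusterSize c' i)) / 2 ≤
        ((Finset.range n).filter fun i => IsSequentialMove (f i) (f (i + 1))).card) ∧
    (∑ i : Fin k, Nat.dist (clusterSize c i) (clusterSize c' i)) / 2 ≤
      transDist c c' := by
  have part1 : ∀ (n : ℕ) (f : ℕ → X → Fin k), f 0 = c → f n = c' →
      (∀ i < n, IsMove (f i) (f (i + 1))) →
      (∑ i : Fin k, Nat.dist (clusterSize c i) (clusterSize c' i)) / 2 ≤
        ((Finset.range n).filter fun i => IsSequentialMove (f i) (f (i + 1))).card := by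
    intro n f h0 hn hmv
    have h := sum_dist_le f n hmv
    rw [h0, hn] at h
    omega
  refine ⟨part1, ?_⟩
  obtain ⟨n, f, h0, hn, hmv⟩ := exists_transform c c'
  refine le_csInf ⟨n, f, h0, hn, hmv⟩ ?_
  rintro b ⟨g, hg0, hgb, hgmv⟩
  calc (∑ i : Fin k, Nat.dist (clusterSize c i) (clusterSize c' i)) / 2
      ≤ ((Finset.range b).filter fun i => IsSequentialMove (g i) (g (i + 1))).card :=
        part1 b g hg0 hgb hgmv
    _ ≤ (Finset.range b).card := Finset.card_filter_le _ _
    _ = b := Finset.card_range b
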